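/- Let S = Ŝ(Φ,φ̲,K) + S̄ where Ŝ is independent of the background sources K̲ and background ghosts C̲, and S̄ is linear in the quantum fields Φ, vanishes at C̲ = 0, and has Φ-independent δ_l S̄/δK̲_α. Then the effective action satisfies Γ(Φ,Φ̲,K,K̲) = Γ̂(Φ,φ̲,K) + S̄(Φ,Φ̲,K,K̲); i.e. S̄ receives no radiative corrections. -/

import Mathlib

open MeasureTheory

noncomputable section

/-- Partition function of the full action `S = Ŝ + S̄`. -/
def Zfull {ι p g κ : Type} [Fintype ι] [DecidableEq ι]
    (Shat : (ι → ℝ) → (p → ℝ) → (ι → ℝ) → ℝ)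
    (Sbar : (ι → ℝ) → (p → ℝ) → (g → ℝ) → (ι → ℝ) → (κ → ℝ) → ℝ)
    (J : ι → ℝ) (φb : p → ℝ) (Cb : g → ℝ) (K : ι → ℝ) (Kb : κ → ℝ) : ℝ :=
  ∫ φ : ι → ℝ,
    Real.exp (-(Shat φ φb K + Sbar φ φb Cb K Kb) + ∑ α, φ α * J α)

def Wfull {ι p g κ : Type} [Fintype ι] [DecidableEq ι]
    (Shat : (ι → ℝ) → (p → ℝ) → (ι → ℝ) → ℝ)
    (Sbar : (ι → ℝ) → (p → ℝ) → (g → ℝ) → (ι → ℝ) → (κ → ℝ) → ℝ)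
    (J : ι → ℝ) (φb : p → ℝ) (Cb : g → ℝ) (K : ι → ℝ) (Kb : κ → ℝ) : ℝ :=
  Real.log (Zfull Shat Sbar J φb Cb K Kb)

/-- The effective action of the full theory. -/
def Gamfull {ι p g κ : Type} [Fintype ι] [DecidableEq ι]
    (Shat : (ι → ℝ) → (p → ℝ) → (ι → ℝ) → ℝ)
    (Sbar : (ι → ℝ) → (p → ℝ) → (g → ℝ) → (ι → ℝ) → (κ → ℝ) → ℝ)
    (Jf : (ι → ℝ) → (p → ℝ) → (g → ℝ) → (ι → ℝ) → (κ → ℝ) → (ι → ℝ))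
    (Φ : ι → ℝ) (φb : p → ℝ) (Cb : g → ℝ) (K : ι → ℝ) (Kb : κ → ℝ) : ℝ :=
  -Wfull Shat Sbar (Jf Φ φb Cb K Kb) φb Cb K Kb
    + ∑ α, Φ α * Jf Φ φb Cb K Kb α

/-- Partition function of the quantum action `Ŝ` alone. -/
def Zhat {ι p : Type} [Fintype ι] [DecidableEq ι]
    (Shat : (ι → ℝ) → (p → ℝ) → (ι → ℝ) → ℝ)
    (J : ι → ℝ) (φb : p → ℝ) (K : ι → ℝ) : ℝ :=
  ∫ φ : ι → ℝ, Real.exp (-Shat φ φb K + ∑ α, φ α * J α)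

def What {ι p : Type} [Fintype ι] [DecidableEq ι]
    (Shat : (ι → ℝ) → (p → ℝ) → (ι → ℝ) → ℝ)
    (J : ι → ℝ) (φb : p → ℝ) (K : ι → ℝ) : ℝ :=
  Real.log (Zhat Shat J φb K)

/-- The effective action `Γ̂` of the quantum action alone. -/
def Gamhat {ι p : Type} [Fintype ι] [DecidableEq ι]
    (Shat : (ι → ℝ) → (p → ℝ) → (ι → ℝ) → ℝ)
    (Jfh : (ι → ℝ) → (p → ℝ) → (ι → ℝ) → (ι → ℝ))
    (Φ : ι → ℝ) (φb : p → ℝ) (K : ι → ℝ) : ℝ :=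
  -What Shat (Jfh Φ φb K) φb K + ∑ α, Φ α * Jfh Φ φb K α

section AuxLemmas
set_option linter.unusedSectionVars false
set_option maxHeartbeats 1000000
variable {ι : Type} [Fintype ι] [DecidableEq ι]

lemma integrable_of_pos {α : Type*} [MeasurableSpace α] {μ : MeasureTheory.Measure α}
    {f : α → ℝ} (h : 0 < ∫ x, f x ∂μ) : Integrable f μ := by
  by_contra hc
  rw [integral_undef hc] at h
  exact lt_irrefl _ h

def pairCLM {ι : Type} [Fintype ι] (φ : ι → ℝ) : (ι → ℝ) →L[ℝ] ℝ :=
  ∑ α, φ α • ContinuousLinearMap.proj α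

lemma pairCLM_apply (φ v : ι → ℝ) : pairCLM φ v = ∑ α, φ α * v α := by
  simp [pairCLM]

lemma pairCLM_norm_le (φ : ι → ℝ) : ‖pairCLM φ‖ ≤ ∑ α, |φ α| := by
  refine ContinuousLinearMap.opNorm_le_bound _ (Finset.sum_nonneg fun _ _ => abs_nonneg _) ?_
  intro v
  rw [pairCLM_apply]
  calc |∑ α, φ α * v α| ≤ ∑ α, |φ α * v α| := Finset.abs_sum_le_sum_abs _ _
    _ ≤ ∑ α, |φ α| * ‖v‖ := by
        refine Finset.sum_le_sum fun α _ => ?_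
        rw [abs_mul]
        exact mul_le_mul_of_nonneg_left (norm_le_pi_norm v α) (abs_nonneg _)
    _ = (∑ α, |φ α|) * ‖v‖ := by rw [Finset.sum_mul]

lemma continuous_pairCLM : Continuous (pairCLM (ι := ι)) := by
  unfold pairCLM
  exact continuous_finset_sum _ fun α _ => (continuous_apply α).smul continuous_const

lemma diff_aux {E : (ι → ℝ) → (ι → ℝ) → ℝ} {bound : (ι → ℝ) → ℝ}
    {F' : (ι → ℝ) → ((ι → ℝ) →L[ℝ] ℝ)} {J₀ : ι → ℝ}
    (hmeas : ∀ J : ι → ℝ, AEStronglyMeasurable (fun φ => E J φ) volume)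
    (hint : Integrable (fun φ => E J₀ φ))
    (hF'meas : AEStronglyMeasurable F' volume)
    (hlip : ∀ᵐ φ : ι → ℝ, ∀ J ∈ Metric.ball J₀ 1, ‖E J φ - E J₀ φ‖ ≤ bound φ * ‖J - J₀‖)
    (hbint : Integrable bound)
    (hdiff : ∀ᵐ φ : ι → ℝ, HasFDerivAt (fun J => E J φ) (F' φ) J₀) :
    DifferentiableAt ℝ (fun J : ι → ℝ => ∫ φ, E J φ) J₀ :=
  (hasFDerivAt_integral_of_dominated_loc_of_lip' (𝕜 := ℝ) (Metric.ball_mem_nhds J₀ zero_lt_one)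
    (fun J _ => hmeas J) hint hF'meas hlip hbint hdiff).2.differentiableAt

lemma differentiableAt_Z {f : (ι → ℝ) → ℝ}
    (hInt : ∀ J : ι → ℝ, Integrable (fun φ => Real.exp (f φ + ∑ α, φ α * J α)))
    (J₀ : ι → ℝ) :
    DifferentiableAt ℝ (fun J : ι → ℝ => ∫ φ, Real.exp (f φ + ∑ α, φ α * J α)) J₀ := by
  classical
  suffices hgoal : DifferentiableAt ℝ
      (fun J : ι → ℝ => ∫ φ, Real.exp (f φ + ∑ α, φ α * J α)) J₀ from hgoal
  set T : (ι → ℝ) → ℝ := fun φ => ∑ α, |φ α| with hT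
  set E : (ι → ℝ) → (ι → ℝ) → ℝ := fun J φ => Real.exp (f φ + ∑ α, φ α * J α) with hEdef
  have hEpos : ∀ J φ, 0 < E J φ := fun J φ => Real.exp_pos _
  set Js : Finset ι → (ι → ℝ) := fun s α => J₀ α + (if α ∈ s then 2 else -2) with hJs
  set bound : (ι → ℝ) → ℝ := fun φ => ∑ s ∈ Finset.univ.powerset, E (Js s) φ with hbound
  have hInt' : ∀ J : ι → ℝ, Integrable (fun φ => E J φ) := hInt
  show DifferentiableAt ℝ (fun J : ι → ℝ => ∫ φ, E J φ) J₀
  have hderiv : ∀ (φ J : ι → ℝ), HasFDerivAt (fun J => E J φ) (E J φ • pairCLM φ) J := by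
    intro φ J
    have h0 : HasFDerivAt (fun J : ι → ℝ => f φ + pairCLM φ J) (pairCLM φ) J :=
      (pairCLM φ).hasFDerivAt.const_add (f φ)
    have h1 := h0.exp
    simp only [pairCLM_apply] at h1
    exact h1
  have hTnn : ∀ φ, 0 ≤ T φ := fun φ => Finset.sum_nonneg fun _ _ => abs_nonneg _
  have hbnd : ∀ (φ : ι → ℝ), ∀ J ∈ Metric.ball J₀ 1, ‖E J φ • pairCLM φ‖ ≤ bound φ := by
    intro φ J hJ
    have h1 : ‖E J φ • pairCLM φ‖ ≤ E J φ * T φ := by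
      calc ‖E J φ • pairCLM φ‖ ≤ ‖E J φ‖ * ‖pairCLM φ‖ :=
            ContinuousLinearMap.opNorm_smul_le _ _
        _ ≤ E J φ * T φ := by
            rw [Real.norm_eq_abs, abs_of_pos (hEpos J φ)]
            exact mul_le_mul_of_nonneg_left (pairCLM_norm_le φ) (hEpos J φ).le
    have h2 : E J φ ≤ E J₀ φ * Real.exp (T φ) := by
      rw [hEdef]
      simp only
      rw [← Real.exp_add]
      apply Real.exp_le_exp.mpr
      have : ∑ α, φ α * J α - ∑ α, φ α * J₀ α ≤ T φ := by
        rw [← Finset.sum_sub_distrib]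
        calc ∑ α, (φ α * J α - φ α * J₀ α) ≤ ∑ α, |φ α * J α - φ α * J₀ α| :=
              Finset.sum_le_sum fun α _ => le_abs_self _
          _ ≤ ∑ α, |φ α| * 1 := by
              refine Finset.sum_le_sum fun α _ => ?_
              rw [← mul_sub, abs_mul]
              refine mul_le_mul_of_nonneg_left ?_ (abs_nonneg _)
              have hd := dist_le_pi_dist J J₀ α
              rw [Real.dist_eq] at hd
              exact hd.trans (le_of_lt (Metric.mem_ball.mp hJ))
          _ = T φ := by simp [hT]
      linarith
    have h3 : T φ * Real.exp (T φ) ≤ Real.exp (2 * T φ) := by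
      have ht : T φ ≤ Real.exp (T φ) := (Real.add_one_le_exp _).trans' (by linarith [hTnn φ])
      calc T φ * Real.exp (T φ) ≤ Real.exp (T φ) * Real.exp (T φ) :=
            mul_le_mul_of_nonneg_right ht (Real.exp_pos _).le
        _ = Real.exp (2 * T φ) := by rw [← Real.exp_add]; ring_nf
    have h4 : E J₀ φ * Real.exp (2 * T φ) ≤ bound φ := by
      have hprod : Real.exp (2 * T φ) ≤ ∏ α, (Real.exp (2 * φ α) + Real.exp (-(2 * φ α))) := by
        have he : Real.exp (2 * T φ) = ∏ α, Real.exp (2 * |φ α|) := by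
          rw [← Real.exp_sum, hT, Finset.mul_sum]
        rw [he]
        refine Finset.prod_le_prod (fun α _ => (Real.exp_pos _).le) fun α _ => ?_
        rcases abs_cases (φ α) with ⟨h, _⟩ | ⟨h, _⟩
        · rw [h]; exact le_add_of_nonneg_right (Real.exp_pos _).le
        · rw [h, mul_neg]; exact le_add_of_nonneg_left (Real.exp_pos _).le
      have hexpand : ∏ α, (Real.exp (2 * φ α) + Real.exp (-(2 * φ α)))
          = ∑ s ∈ Finset.univ.powerset, Real.exp (∑ α, φ α * (if α ∈ s then 2 else -2)) := by
        rw [Finset.prod_add]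
        refine Finset.sum_congr rfl fun s hs => ?_
        rw [← Real.exp_sum, ← Real.exp_sum, ← Real.exp_add]
        congr 1
        rw [← Finset.sum_filter_add_sum_filter_not Finset.univ (· ∈ s)]
        congr 1
        · rw [Finset.filter_mem_eq_inter, Finset.univ_inter]
          exact Finset.sum_congr rfl fun α hα => by rw [if_pos hα]; ring
        · have hf2 : Finset.univ.filter (fun α => ¬ α ∈ s) = Finset.univ \ s := by
            ext α; simp
          rw [hf2]
          refine Finset.sum_congr rfl fun α hα => ?_
          rw [if_neg (Finset.mem_sdiff.mp hα).2]; ring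
      calc E J₀ φ * Real.exp (2 * T φ)
          ≤ E J₀ φ * ∑ s ∈ Finset.univ.powerset,
              Real.exp (∑ α, φ α * (if α ∈ s then 2 else -2)) := by
            rw [← hexpand]
            exact mul_le_mul_of_nonneg_left hprod (hEpos _ _).le
        _ = bound φ := by
            rw [hbound, Finset.mul_sum]
            refine Finset.sum_congr rfl fun s hs => ?_
            rw [hEdef]
            simp only
            rw [← Real.exp_add]
            congr 1
            simp only [hJs, mul_add, Finset.sum_add_distrib]
            ring
    calc ‖E J φ • pairCLM φ‖ ≤ E J φ * T φ := h1
      _ ≤ E J₀ φ * Real.exp (T φ) * T φ := mul_le_mul_of_nonneg_right h2 (hTnn φ)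
      _ = E J₀ φ * (T φ * Real.exp (T φ)) := by ring
      _ ≤ E J₀ φ * Real.exp (2 * T φ) := mul_le_mul_of_nonneg_left h3 (hEpos _ _).le
      _ ≤ bound φ := h4
  have hlip : ∀ᵐ φ : ι → ℝ, ∀ J ∈ Metric.ball J₀ 1, ‖E J φ - E J₀ φ‖ ≤ bound φ * ‖J - J₀‖ := by
    refine Filter.Eventually.of_forall fun φ J hJ => ?_
    exact Convex.norm_image_sub_le_of_norm_hasFDerivWithin_le (𝕜 := ℝ)
      (f := fun J => E J φ) (f' := fun x => E x φ • pairCLM φ) (s := Metric.ball J₀ 1)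
      (fun x hx => (hderiv φ x).hasFDerivWithinAt) (fun x hx => hbnd φ x hx)
      (convex_ball J₀ 1) (Metric.mem_ball_self zero_lt_one) hJ
  have hbint : Integrable bound := by
    rw [hbound]
    exact integrable_finset_sum _ fun s _ => hInt' (Js s)
  exact diff_aux (fun J => (hInt' J).aestronglyMeasurable) (hInt' J₀)
    (((hInt' J₀).aestronglyMeasurable).smul continuous_pairCLM.aestronglyMeasurable)
    hlip hbint (Filter.Eventually.of_forall fun φ => hderiv φ J₀)

lemma convexOn_logZ {f : (ι → ℝ) → ℝ}
    (hInt : ∀ J : ι → ℝ, Integrable (fun φ => Real.exp (f φ + ∑ α, φ α * J α)))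
    (hpos : ∀ J : ι → ℝ, 0 < ∫ φ, Real.exp (f φ + ∑ α, φ α * J α)) :
    ConvexOn ℝ Set.univ
      (fun J : ι → ℝ => Real.log (∫ φ, Real.exp (f φ + ∑ α, φ α * J α))) := by
  set Z : (ι → ℝ) → ℝ := fun J => ∫ φ, Real.exp (f φ + ∑ α, φ α * J α) with hZ
  refine ⟨convex_univ, ?_⟩
  intro J1 _ J2 _ a b ha hb hab
  have hkey : Z (a • J1 + b • J2) ≤ Z J1 ^ a * Z J2 ^ b := by
    have hof : ∀ J : ι → ℝ, ENNReal.ofReal (Z J)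
        = ∫⁻ φ, ENNReal.ofReal (Real.exp (f φ + ∑ α, φ α * J α)) := fun J =>
      ofReal_integral_eq_lintegral_ofReal (hInt J)
        (Filter.Eventually.of_forall fun _ => (Real.exp_pos _).le)
    have hmeas : ∀ J : ι → ℝ, AEMeasurable
        (fun φ : ι → ℝ => ENNReal.ofReal (Real.exp (f φ + ∑ α, φ α * J α))) :=
      fun J => (hInt J).aestronglyMeasurable.aemeasurable.ennreal_ofReal
    have hpt : ∀ φ : ι → ℝ,
        ENNReal.ofReal (Real.exp (f φ + ∑ α, φ α * (a • J1 + b • J2) α))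
        = ENNReal.ofReal (Real.exp (f φ + ∑ α, φ α * J1 α)) ^ a
          * ENNReal.ofReal (Real.exp (f φ + ∑ α, φ α * J2 α)) ^ b := by
      intro φ
      have hexp : f φ + ∑ α, φ α * (a • J1 + b • J2) α
          = (f φ + ∑ α, φ α * J1 α) * a + (f φ + ∑ α, φ α * J2 α) * b := by
        simp only [Pi.add_apply, Pi.smul_apply, smul_eq_mul]
        have h1 : ∀ x : ι, φ x * (a * J1 x + b * J2 x)
            = φ x * J1 x * a + φ x * J2 x * b := fun x => by ring
        rw [Finset.sum_congr rfl fun x _ => h1 x, Finset.sum_add_distrib,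
          ← Finset.sum_mul, ← Finset.sum_mul]
        linear_combination f φ * hab.symm
      rw [hexp, Real.exp_add, Real.exp_mul, Real.exp_mul,
        ENNReal.ofReal_mul (Real.rpow_nonneg (Real.exp_pos _).le _),
        ENNReal.ofReal_rpow_of_pos (Real.exp_pos _),
        ENNReal.ofReal_rpow_of_pos (Real.exp_pos _)]
    have hE : ENNReal.ofReal (Z (a • J1 + b • J2))
        ≤ ENNReal.ofReal (Z J1 ^ a * Z J2 ^ b) := by
      calc ENNReal.ofReal (Z (a • J1 + b • J2))
          = ∫⁻ φ, ENNReal.ofReal (Real.exp (f φ + ∑ α, φ α * J1 α)) ^ a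
            * ENNReal.ofReal (Real.exp (f φ + ∑ α, φ α * J2 α)) ^ b := by
            rw [hof]
            exact lintegral_congr hpt
        _ ≤ (∫⁻ φ, ENNReal.ofReal (Real.exp (f φ + ∑ α, φ α * J1 α))) ^ a
            * (∫⁻ φ, ENNReal.ofReal (Real.exp (f φ + ∑ α, φ α * J2 α))) ^ b :=
            ENNReal.lintegral_mul_norm_pow_le (hmeas J1) (hmeas J2) ha hb hab
        _ = ENNReal.ofReal (Z J1 ^ a * Z J2 ^ b) := by
            rw [← hof, ← hof, ENNReal.ofReal_rpow_of_pos (hpos J1),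
              ENNReal.ofReal_rpow_of_pos (hpos J2),
              ← ENNReal.ofReal_mul (Real.rpow_nonneg (hpos J1).le _)]
    have hrhs : (0:ℝ) ≤ Z J1 ^ a * Z J2 ^ b :=
      mul_nonneg (Real.rpow_nonneg (hpos J1).le _) (Real.rpow_nonneg (hpos J2).le _)
    exact (ENNReal.ofReal_le_ofReal_iff hrhs).mp hE
  show Real.log (Z (a • J1 + b • J2)) ≤ a • Real.log (Z J1) + b • Real.log (Z J2)
  have h1 : (0:ℝ) < Z J1 ^ a := Real.rpow_pos_of_pos (hpos J1) a
  have h2 : (0:ℝ) < Z J2 ^ b := Real.rpow_pos_of_pos (hpos J2) b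
  calc Real.log (Z (a • J1 + b • J2)) ≤ Real.log (Z J1 ^ a * Z J2 ^ b) :=
        Real.log_le_log (hpos _) hkey
    _ = a • Real.log (Z J1) + b • Real.log (Z J2) := by
        rw [Real.log_mul h1.ne' h2.ne', Real.log_rpow (hpos J1), Real.log_rpow (hpos J2)]
        simp [smul_eq_mul]
        rfl

lemma convex_grad_ineq {f : (ι → ℝ) → ℝ} (hc : ConvexOn ℝ Set.univ f)
    {x : ι → ℝ} {D : (ι → ℝ) →L[ℝ] ℝ} (hD : HasFDerivAt f D x) (y : ι → ℝ) :
    f x + D (y - x) ≤ f y := by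
  have hline : HasDerivAt (fun t : ℝ => t • (y - x) + x) (y - x) 0 := by
    simpa using ((hasDerivAt_id (0:ℝ)).smul_const (y - x)).add_const x
  have hg : HasDerivAt (fun t : ℝ => f (t • (y - x) + x)) (D (y - x)) 0 := by
    have hD' : HasFDerivAt f D ((0:ℝ) • (y - x) + x) := by simpa using hD
    simpa [Function.comp_def] using hD'.comp_hasDerivAt (f := fun t : ℝ => t • (y - x) + x) 0 hline
  have hgc : ConvexOn ℝ Set.univ (fun t : ℝ => f (t • (y - x) + x)) := by
    have := hc.comp_affineMap (AffineMap.lineMap x y)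
    have he : (fun t : ℝ => f (t • (y - x) + x)) = f ∘ (AffineMap.lineMap x y) := by
      funext t; simp [AffineMap.lineMap_apply]
    rw [he]
    simpa using this
  have := hgc.le_slope_of_hasDerivAt (Set.mem_univ (0:ℝ)) (Set.mem_univ (1:ℝ)) zero_lt_one hg
  simp [slope_def_field] at this
  have h0 : (fun t : ℝ => f (t • (y - x) + x)) 0 = f x := by simp
  have h1 : (fun t : ℝ => f (t • (y - x) + x)) 1 = f y := by simp
  have hsub : D (y - x) = D y - D x := D.map_sub y x
  linarith [this]

lemma clm_eval {D : (ι → ℝ) →L[ℝ] ℝ} {Φ : ι → ℝ} (h : ∀ α, D (Pi.single α 1) = Φ α)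
    (v : ι → ℝ) : D v = ∑ α, v α * Φ α := by
  have hv : v = ∑ α, v α • (Pi.single α (1:ℝ) : ι → ℝ) := by
    funext β
    simp [Pi.single_apply]
  calc D v = D (∑ α, v α • (Pi.single α (1:ℝ) : ι → ℝ)) := by rw [← hv]
    _ = ∑ α, v α * Φ α := by
        rw [map_sum]
        exact Finset.sum_congr rfl fun α _ => by rw [D.map_smul, smul_eq_mul, h α]

end AuxLemmas

set_option maxHeartbeats 1000000
/-- if `S = Ŝ + S̄` with `Ŝ` independent of the background
sources `K̲` and background ghosts `C̲`, and `S̄` linear in the quantum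
fields `Φ`, vanishing at `C̲ = 0`, with `Φ`-independent `δ_l S̄/δK̲`, then
`Γ(Φ,Φ̲,K,K̲) = Γ̂(Φ,φ̲,K) + S̄(Φ,Φ̲,K,K̲)`:
the background action receives no radiative corrections. -/
theorem stmt13 {ι p g κ : Type} [Fintype ι] [DecidableEq ι]
    (Shat : (ι → ℝ) → (p → ℝ) → (ι → ℝ) → ℝ)
    (Sbar : (ι → ℝ) → (p → ℝ) → (g → ℝ) → (ι → ℝ) → (κ → ℝ) → ℝ)
    -- S̄ is linear (affine) in the quantum fields Φ, with Φ-linear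
    -- coefficient `lam` independent of the background sources K̲
    (lam : ι → (p → ℝ) → (g → ℝ) → (ι → ℝ) → ℝ)
    (hlin : ∀ (Φ : ι → ℝ) (φb : p → ℝ) (Cb : g → ℝ) (K : ι → ℝ) (Kb : κ → ℝ),
      Sbar Φ φb Cb K Kb = Sbar 0 φb Cb K Kb + ∑ α, Φ α * lam α φb Cb K)
    -- S̄ vanishes when the background ghosts are switched off
    (hvan : ∀ (Φ : ι → ℝ) (φb : p → ℝ) (K : ι → ℝ) (Kb : κ → ℝ),
      Sbar Φ φb 0 K Kb = 0)
    (hZf : ∀ (J : ι → ℝ) (φb : p → ℝ) (Cb : g → ℝ) (K : ι → ℝ) (Kb : κ → ℝ),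
      0 < Zfull Shat Sbar J φb Cb K Kb)
    (hZh : ∀ (J : ι → ℝ) (φb : p → ℝ) (K : ι → ℝ), 0 < Zhat Shat J φb K)
    (Jf : (ι → ℝ) → (p → ℝ) → (g → ℝ) → (ι → ℝ) → (κ → ℝ) → (ι → ℝ))
    (hJ : ∀ (Φ : ι → ℝ) (φb : p → ℝ) (Cb : g → ℝ) (K : ι → ℝ) (Kb : κ → ℝ)
        (α : ι),
      fderiv ℝ (fun j => Wfull Shat Sbar j φb Cb K Kb) (Jf Φ φb Cb K Kb)
        (Pi.single α 1) = Φ α)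
    (Jfh : (ι → ℝ) → (p → ℝ) → (ι → ℝ) → (ι → ℝ))
    (hJh : ∀ (Φ : ι → ℝ) (φb : p → ℝ) (K : ι → ℝ) (α : ι),
      fderiv ℝ (fun j => What Shat j φb K) (Jfh Φ φb K) (Pi.single α 1) = Φ α) :
    ∀ (Φ : ι → ℝ) (φb : p → ℝ) (Cb : g → ℝ) (K : ι → ℝ) (Kb : κ → ℝ),
      Gamfull Shat Sbar Jf Φ φb Cb K Kb
        = Gamhat Shat Jfh Φ φb K + Sbar Φ φb Cb K Kb := by
  intro Φ φb Cb K Kb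
  classical
  set lamv : ι → ℝ := fun α => lam α φb Cb K with hlamv
  set c : ℝ := Sbar 0 φb Cb K Kb with hc
  -- integrability of the quantum partition-function integrand
  have hIntf : ∀ J : ι → ℝ,
      Integrable (fun φ : ι → ℝ => Real.exp (-Shat φ φb K + ∑ α, φ α * J α)) :=
    fun J => integrable_of_pos (hZh J φb K)
  -- decomposition of the full partition function
  have hZdecomp : ∀ J : ι → ℝ, Zfull Shat Sbar J φb Cb K Kb
      = Real.exp (-c) * Zhat Shat (J - lamv) φb K := by
    intro J
    unfold Zfull Zhat
    have hfun : (fun φ : ι → ℝ =>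
        Real.exp (-(Shat φ φb K + Sbar φ φb Cb K Kb) + ∑ α, φ α * J α))
        = fun φ : ι → ℝ => Real.exp (-c)
            * Real.exp (-Shat φ φb K + ∑ α, φ α * (J - lamv) α) := by
      funext φ
      rw [← Real.exp_add]
      congr 1
      rw [hlin φ φb Cb K Kb]
      have hsum : ∑ α, φ α * (J - lamv) α
          = ∑ α, φ α * J α - ∑ α, φ α * lamv α := by
        rw [← Finset.sum_sub_distrib]
        exact Finset.sum_congr rfl fun α _ => by simp [Pi.sub_apply]; ring
      have h1 : c = Sbar 0 φb Cb K Kb := rfl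
      have h2 : ∑ α, φ α * lamv α = ∑ α, φ α * lam α φb Cb K := rfl
      rw [hsum, h1, h2]
      ring
    rw [hfun, integral_const_mul]
  -- decomposition of the full generating functional
  have hWdecomp : ∀ J : ι → ℝ, Wfull Shat Sbar J φb Cb K Kb
      = -c + What Shat (J - lamv) φb K := by
    intro J
    unfold Wfull What
    rw [hZdecomp J, Real.log_mul (Real.exp_ne_zero _) (hZh _ φb K).ne', Real.log_exp]
  -- analytic facts about What
  have hWdiff : ∀ J : ι → ℝ, DifferentiableAt ℝ (fun j : ι → ℝ => What Shat j φb K) J := by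
    intro J
    have h1 : DifferentiableAt ℝ (fun j : ι → ℝ => Zhat Shat j φb K) J :=
      differentiableAt_Z (f := fun φ => -Shat φ φb K) hIntf J
    exact h1.log (hZh J φb K).ne'
  have hWconv : ConvexOn ℝ Set.univ (fun j : ι → ℝ => What Shat j φb K) :=
    convexOn_logZ (f := fun φ => -Shat φ φb K) hIntf (fun J => hZh J φb K)
  -- the two stationarity points
  set x : ι → ℝ := Jf Φ φb Cb K Kb - lamv with hx
  set y : ι → ℝ := Jfh Φ φb K with hy
  set D : (ι → ℝ) →L[ℝ] ℝ := fderiv ℝ (fun j : ι → ℝ => What Shat j φb K) x with hD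
  set D' : (ι → ℝ) →L[ℝ] ℝ := fderiv ℝ (fun j : ι → ℝ => What Shat j φb K) y with hD'
  have hDx : HasFDerivAt (fun j : ι → ℝ => What Shat j φb K) D x := (hWdiff x).hasFDerivAt
  have hDy : HasFDerivAt (fun j : ι → ℝ => What Shat j φb K) D' y := (hWdiff y).hasFDerivAt
  -- D evaluates to Φ on basis vectors
  have hDval : ∀ α, D (Pi.single α 1) = Φ α := by
    intro α
    have hsub : HasFDerivAt (fun j : ι → ℝ => j - lamv)
        (ContinuousLinearMap.id ℝ (ι → ℝ)) (Jf Φ φb Cb K Kb) :=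
      (hasFDerivAt_id _).sub_const lamv
    have hcomp : HasFDerivAt (fun j : ι → ℝ => -c + What Shat (j - lamv) φb K) D
        (Jf Φ φb Cb K Kb) := by
      have h2 := (hDx.comp (Jf Φ φb Cb K Kb) hsub).const_add (-c)
      simpa using h2
    have hfuneq : (fun j : ι → ℝ => Wfull Shat Sbar j φb Cb K Kb)
        = fun j : ι → ℝ => -c + What Shat (j - lamv) φb K := funext hWdecomp
    have := hJ Φ φb Cb K Kb α
    rw [hfuneq, hcomp.fderiv] at this
    exact this
  have hD'val : ∀ α, D' (Pi.single α 1) = Φ α := fun α => by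
    rw [hD']; exact hJh Φ φb K α
  -- gradient inequalities give equality of Legendre values
  have hg1 := convex_grad_ineq hWconv hDx y
  have hg2 := convex_grad_ineq hWconv hDy x
  rw [clm_eval hDval] at hg1
  rw [clm_eval hD'val] at hg2
  have hsum1 : ∑ α, (y - x) α * Φ α = (∑ α, Φ α * y α) - ∑ α, Φ α * x α := by
    rw [← Finset.sum_sub_distrib]
    exact Finset.sum_congr rfl fun α _ => by simp [Pi.sub_apply]; ring
  have hsum2 : ∑ α, (x - y) α * Φ α = (∑ α, Φ α * x α) - ∑ α, Φ α * y α := by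
    rw [← Finset.sum_sub_distrib]
    exact Finset.sum_congr rfl fun α _ => by simp [Pi.sub_apply]; ring
  rw [hsum1] at hg1
  rw [hsum2] at hg2
  -- final assembly
  unfold Gamfull Gamhat
  rw [hWdecomp (Jf Φ φb Cb K Kb)]
  have hJfx : ∀ α, Jf Φ φb Cb K Kb α = x α + lamv α := fun α => by
    rw [hx]; simp [Pi.sub_apply]
  have hS1 : ∑ α, Φ α * Jf Φ φb Cb K Kb α
      = (∑ α, Φ α * x α) + ∑ α, Φ α * lamv α := by
    rw [← Finset.sum_add_distrib]
    exact Finset.sum_congr rfl fun α _ => by rw [hJfx α]; ring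
  have hSbar : Sbar Φ φb Cb K Kb = c + ∑ α, Φ α * lamv α := hlin Φ φb Cb K Kb
  rw [hS1, hSbar]
  have hxx : What Shat (Jf Φ φb Cb K Kb - lamv) φb K = What Shat x φb K := by rw [← hx]
  rw [hxx]
  linarith [hg1, hg2]
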